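/- Let (aY, H) be a causal space (Axioms (h1)–(h6)). Then: (a) for any event e, the timelike line h_e, with the topology induced from aY, is homeomorphic to ℝ, and the boundary of its closure in aY ∪ S¹ is e; (b) for any two distinct events a, a' there is a timelike line containing both if and only if a and a' are in the strong causal relation, and in this case such a timelike line is unique; (c) two distinct timelike lines h_e, h_{e'} have a common event if and only if e and e' are in the strong causal relation, and in this case the common event is unique; (d) a light line p_x intersects a timelike line h_e if and only if x ∉ e, and in this case the common event is unique. -/

import Mathlib

open Set
open scoped ENNReal

noncomputable section

namespace Paper

/-- The pairs `(x,y)` and `(z,u)` of points of the circle separate each other: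
`z` and `u` lie in different connected components of the complement of `{x,y}`. -/
def SeparatesPts (x y z u : Circle) : Prop :=
  z ∈ ({x, y}ᶜ : Set Circle) ∧ u ∈ ({x, y}ᶜ : Set Circle) ∧
    u ∉ connectedComponentIn ({x, y}ᶜ : Set Circle) z

/-- An event: an unordered pair of distinct points of the circle. -/
abbrev Event : Type := {e : Sym2 Circle // ¬ e.IsDiag}

/-- The underlying two-point subset of the circle of an event. -/
def EventPts (e : Event) : Set Circle := {x | x ∈ e.1}

/-- Two events separate each other as pairs of points on the circle. -/
def EventSep (a b : Event) : Prop :=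
  ∃ x y z u : Circle, a.1 = s(x, y) ∧ b.1 = s(z, u) ∧ SeparatesPts x y z u

/-- Two events are in the causal relation iff they do not separate each other. -/
def Causal (a b : Event) : Prop := ¬ EventSep a b

/-- Two events lie on a common light line iff they share a point. -/
def OnLight (a b : Event) : Prop := ∃ x : Circle, x ∈ a.1 ∧ x ∈ b.1

/-- Strong causal relation: causal and not on a common light line. -/
def StrongCausal (a b : Event) : Prop := Causal a b ∧ ¬ OnLight a b

/-- `U` is one of the two open arcs determined by the event `e`. -/
def IsOpenArc (e : Event) (U : Set Circle) : Prop :=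
  ∃ z, z ∉ EventPts e ∧ U = connectedComponentIn (EventPts e)ᶜ z

/-- `a ≤ b ≤ c`: the events `a` and `c` lie in the two (closed) arcs determined
by `b` on different sides of `b`. -/
def Between (a b c : Event) : Prop :=
  ∃ U V : Set Circle, IsOpenArc b U ∧ IsOpenArc b V ∧ U ≠ V ∧
    EventPts a ⊆ closure U ∧ EventPts c ⊆ closure V

/-- `a < b < c`. -/
def SBtw (a b c : Event) : Prop := Between a b c ∧ a ≠ b ∧ c ≠ b

/-- The event `d` is strictly between the events `a` and `c`: `a` and `c` lie in
different open arcs determined by `d`. -/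
def StrictlyBetween (d a c : Event) : Prop :=
  ∃ U V : Set Circle, IsOpenArc d U ∧ IsOpenArc d V ∧ U ≠ V ∧
    EventPts a ⊆ U ∧ EventPts c ⊆ V

/-- `ω` is an infinitely remote point of the semi-metric `d`. -/
def IsRemote (d : Circle → Circle → ℝ≥0∞) (ω : Circle) : Prop :=
  ∀ x, x ≠ ω → d x ω = ⊤

/-- A semi-metric: symmetric, vanishing exactly on the diagonal, with at most one
infinitely remote point. -/
structure IsSemiMetric (d : Circle → Circle → ℝ≥0∞) : Prop where
  symm : ∀ x y, d x y = d y x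
  eq_zero_iff : ∀ x y, d x y = 0 ↔ x = y
  top_remote : ∀ x y, d x y = ⊤ → ∃ ω, IsRemote d ω ∧ (x = ω ∨ y = ω)
  remote_unique : ∀ ω ω', IsRemote d ω → IsRemote d ω' → ω = ω'

/-- The semi-metric `d` has no infinitely remote point in the set `s`. -/
def AvoidsRemote (d : Circle → Circle → ℝ≥0∞) (s : Set Circle) : Prop :=
  ∀ ω ∈ s, ¬ IsRemote d ω

/-- Real-valued distance. -/
def dR (d : Circle → Circle → ℝ≥0∞) (x y : Circle) : ℝ := (d x y).toReal

/-- A Möbius structure on the circle: a class of pairwise Möbius equivalent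
semi-metrics (same cross-ratios on nondegenerate 4-tuples), containing for each
point a semi-metric with that point infinitely remote (metric inversion). -/
structure MoebiusStructure : Type where
  sems : Set (Circle → Circle → ℝ≥0∞)
  nonempty : sems.Nonempty
  isSemiMetric : ∀ d ∈ sems, IsSemiMetric d
  exists_remote : ∀ ω : Circle, ∃ d ∈ sems, IsRemote d ω
  compatible : ∀ d ∈ sems, ∀ d' ∈ sems, ∀ x y z u : Circle,
    x ≠ y → x ≠ z → x ≠ u → y ≠ z → y ≠ u → z ≠ u →
    AvoidsRemote d {x, y, z, u} → AvoidsRemote d' {x, y, z, u} →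
    dR d x z * dR d y u * (dR d' x u * dR d' y z)
      = dR d' x z * dR d' y u * (dR d x u * dR d y z)

/-- The open balls, centered at finite points, of the semi-metrics of `D`
having infinitely remote points. -/
def mBalls (D : Set (Circle → Circle → ℝ≥0∞)) : Set (Set Circle) :=
  {B | ∃ d ∈ D, ∃ ω : Circle, IsRemote d ω ∧ ∃ x : Circle, x ≠ ω ∧
        ∃ r : ℝ≥0∞, 0 < r ∧ B = {y | d x y < r}}

/-- Axiom (T): the `M`-topology on the circle is the standard one. -/
def AxiomT (M : MoebiusStructure) : Prop :=
  TopologicalSpace.generateFrom (mBalls M.sems)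
    = (inferInstance : TopologicalSpace Circle)

/-- Axiom (M): monotonicity. -/
def AxiomM (M : MoebiusStructure) : Prop :=
  ∀ x y z u : Circle, SeparatesPts x y z u →
    ∀ d ∈ M.sems, AvoidsRemote d {x, y, z, u} →
      max (dR d x z * dR d y u) (dR d x u * dR d y z) < dR d x y * dR d z u

/-- A monotone Möbius structure on the circle. -/
def IsMonotone (M : MoebiusStructure) : Prop := AxiomT M ∧ AxiomM M

/-- The pair of events `a = (x,y)`, `b = (z,u)` is `M`-harmonic:
`|xz|·|yu| = |xu|·|yz|`. -/
def MHarmonic (M : MoebiusStructure) (a b : Event) : Prop :=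
  ∃ x y z u : Circle, a.1 = s(x, y) ∧ b.1 = s(z, u) ∧
    ∀ d ∈ M.sems, AvoidsRemote d {x, y, z, u} →
      dR d x z * dR d y u = dR d x u * dR d y z

/-- The timelike line dual to the event `e`, for the Möbius structure `M`. -/
def hline (M : MoebiusStructure) (e : Event) : Set Event := {a | MHarmonic M a e}

/-- Axiom (h1). -/
def AxH1 (H : Set (Set Event)) (line : Event → Set Event) : Prop :=
  (∀ e, line e ∈ H) ∧ ∀ h ∈ H, ∃ e, h = line e

/-- Axiom (h2): any event on `h_e` separates `e`. -/
def AxH2 (line : Event → Set Event) : Prop := ∀ e a, a ∈ line e → EventSep a e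

/-- Axiom (h3): any two events on a timelike line are in the causal relation. -/
def AxH3 (line : Event → Set Event) : Prop :=
  ∀ e a b, a ∈ line e → b ∈ line e → Causal a b

/-- Axiom (h4): for any `x ∉ e` there is a unique event `x_e ∈ h_e` containing `x`. -/
def AxH4 (line : Event → Set Event) : Prop :=
  ∀ e : Event, ∀ x : Circle, x ∉ EventPts e → ∃! a : Event, a ∈ line e ∧ x ∈ a.1

/-- Axiom (h5): duality. -/
def AxH5 (line : Event → Set Event) : Prop := ∀ e a, a ∈ line e → e ∈ line a

/-- Axiom (h6): two distinct events lie on at most one common timelike line. -/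
def AxH6 (line : Event → Set Event) : Prop :=
  ∀ a b : Event, a ≠ b → ∀ e e',
    a ∈ line e → b ∈ line e → a ∈ line e' → b ∈ line e' → e = e'

/-- The projection `x_e`: the unique event of the timelike line `h_e` containing `x`
(junk value if there is none). -/
noncomputable def proj (line : Event → Set Event) (e : Event) (x : Circle) : Event :=
  letI := Classical.propDecidable (∃ a, a ∈ line e ∧ x ∈ a.1)
  if h : ∃ a, a ∈ line e ∧ x ∈ a.1 then h.choose else e

/-- Axiom (t1). -/
def AxT1 (t : Event → Event → ℝ) : Prop := ∀ a b, Causal a b → 0 ≤ t a b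

/-- Axiom (t2). -/
def AxT2 (t : Event → Event → ℝ) : Prop :=
  ∀ a b, Causal a b → (t a b = 0 ↔ OnLight a b)

/-- Axiom (t3). -/
def AxT3 (t : Event → Event → ℝ) : Prop := ∀ a b, Causal a b → t a b = t b a

/-- Axiom (t4a): timelike lines are `t`-geodesics. -/
def AxT4a (line : Event → Set Event) (t : Event → Event → ℝ) : Prop :=
  ∀ a, ∀ e e' e'', e ∈ line a → e' ∈ line a → e'' ∈ line a →
    Between e e' e'' → t e e' + t e' e'' = t e e''

/-- Axiom (t4b): events at any prescribed time on both sides. -/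
def AxT4b (line : Event → Set Event) (t : Event → Event → ℝ) : Prop :=
  ∀ a, ∀ e ∈ line a, ∀ s : ℝ, 0 < s →
    ∃ ep em, ep ∈ line a ∧ em ∈ line a ∧ SBtw em e ep ∧ t e ep = s ∧ t e em = s

/-- Axiom (t5). -/
def AxT5 (line : Event → Set Event) (t : Event → Event → ℝ) : Prop :=
  ∀ e d : Event, ∀ x y z u : Circle,
    e.1 = s(x, y) → d.1 = s(z, u) → StrongCausal e d →
    t (proj line e z) (proj line e u) = t (proj line d x) (proj line d y)

/-- Axiom (t6): harmonicity. -/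
def AxT6 (line : Event → Set Event) (t : Event → Event → ℝ) : Prop :=
  ∀ e d : Event, ∀ x y z u : Circle,
    e.1 = s(x, y) → d.1 = s(z, u) → d ∈ line e →
    ∀ a b : Event, a.1 = s(x, z) → b.1 = s(x, u) →
      t (proj line a y) (proj line a u) = t (proj line b y) (proj line b z)

/-- The time determined by a Möbius structure: `0` on light lines, and the
cross-ratio formula for events in the strong causal relation via a
common perpendicular. -/
def TimeSpec (M : MoebiusStructure) (t : Event → Event → ℝ) : Prop :=
  (∀ a b, OnLight a b → t a b = 0) ∧
  (∀ a b e : Event, a ∈ hline M e → b ∈ hline M e → a ≠ b →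
    ∀ x y z z' : Circle, e.1 = s(x, y) → z ∈ a.1 → z' ∈ b.1 →
      ∀ d ∈ M.sems, AvoidsRemote d {x, y, z, z'} →
        t a b = |Real.log (dR d x z' * dR d y z / (dR d x z * dR d y z'))|)

/-- The function `F_{ab}` of the hierarchy of time conditions, on events `d`
strictly between `(o,ω)` and `(o',ω')`, for `a = (o,o')`, `b = (ω,ω')`. -/
noncomputable def Fab (line : Event → Set Event) (t : Event → Event → ℝ)
    (o ω o' ω' : Circle) (d : Event) : ℝ :=
  (t (proj line d o) (proj line d ω) + t (proj line d o') (proj line d ω')) / 2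

end Paper

namespace Paper

/-- The defining property of the reflection `ρ_e` with respect to the event `e`. -/
def RefSpec (line : Event → Set Event) (e : Event) (ρ : Circle → Circle) : Prop :=
  (∀ p ∈ EventPts e, ρ p = p) ∧
    ∀ x, x ∉ EventPts e → ρ x ≠ x ∧ ∃ a ∈ line e, x ∈ a.1 ∧ ρ x ∈ a.1

/-- The label of a fixed-point-free involution of `Fin 4`
(the partner of `0`, shifted down by one). -/
def label (σ : Equiv.Perm (Fin 4)) : Fin 3 :=
  if σ 0 = 1 then 0 else if σ 0 = 2 then 1 else 2

/-- The three fixed-point-free involutions of `Fin 4`, i.e. the three partitions of a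
4-element set into pairs of opposite edges. -/
def inv3 : Fin 3 → Equiv.Perm (Fin 4) :=
  ![Equiv.swap 0 1 * Equiv.swap 2 3, Equiv.swap 0 2 * Equiv.swap 1 3,
    Equiv.swap 0 3 * Equiv.swap 1 2]

/-- The cross-ratio homomorphism `φ : S₄ → S₃`, acting on the labels of the
partitions into pairs of opposite edges by conjugation. -/
def permAct (π : Equiv.Perm (Fin 4)) (j : Fin 3) : Fin 3 := label (π * inv3 j * π⁻¹)

/-- A sub-Möbius structure on the circle: a map `regP₄ → L₄` equivariant with respect
to the signed cross-ratio homomorphism. -/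
def SubMoebius (M : (Fin 4 → Circle) → Fin 3 → ℝ) : Prop :=
  (∀ q : Fin 4 → Circle, Function.Injective q → M q 0 + M q 1 + M q 2 = 0) ∧
  ∀ q : Fin 4 → Circle, Function.Injective q → ∀ π : Equiv.Perm (Fin 4), ∀ j : Fin 3,
    M (q ∘ π) j = ((Equiv.Perm.sign π : ℤ) : ℝ) * M q (permAct π j)

/-- The base values of the sub-Möbius structure associated with a timed causal space:
for a 4-tuple `q = (x,y,z,u)` whose cyclic order is `xyuz` (i.e. the pairs `(x,u)` and
`(y,z)` separate each other), `M(q) = (−t_{xy}, t_{yu}, t_{xy} − t_{yu})`, where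
`t_{xy}` is the time between the projections of `u`, `z` to the timelike line dual to
the event `(x,y)`, and `t_{yu}` the time between the projections of `z`, `x` to the
timelike line dual to the event `(y,u)`. -/
def BaseSpec (line : Event → Set Event) (t : Event → Event → ℝ)
    (M : (Fin 4 → Circle) → Fin 3 → ℝ) : Prop :=
  ∀ q : Fin 4 → Circle, Function.Injective q →
    SeparatesPts (q 0) (q 3) (q 1) (q 2) →
    ∀ exy eyu : Event, exy.1 = s(q 0, q 1) → eyu.1 = s(q 1, q 3) →
      M q 0 = -(t (proj line exy (q 3)) (proj line exy (q 2))) ∧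
      M q 1 = t (proj line eyu (q 2)) (proj line eyu (q 0)) ∧
      M q 2 = t (proj line exy (q 3)) (proj line exy (q 2))
                - t (proj line eyu (q 2)) (proj line eyu (q 0))

/-- The three cross-ratios `(ln cr₁, ln cr₂, ln cr₃)` of a 4-tuple with respect to a
semi-metric. -/
noncomputable def crMap (dm : Circle → Circle → ℝ≥0∞) (q : Fin 4 → Circle) :
    Fin 3 → ℝ :=
  ![Real.log (dR dm (q 0) (q 2) * dR dm (q 1) (q 3)
      / (dR dm (q 0) (q 3) * dR dm (q 1) (q 2))),
    Real.log (dR dm (q 0) (q 3) * dR dm (q 1) (q 2)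
      / (dR dm (q 0) (q 1) * dR dm (q 2) (q 3))),
    Real.log (dR dm (q 0) (q 1) * dR dm (q 2) (q 3)
      / (dR dm (q 1) (q 3) * dR dm (q 0) (q 2)))]

/-- The semi-metrics whose cross-ratio map is the given map `M`. -/
def mapSems (M : (Fin 4 → Circle) → Fin 3 → ℝ) : Set (Circle → Circle → ℝ≥0∞) :=
  {dm | IsSemiMetric dm ∧ ∀ q : Fin 4 → Circle, Function.Injective q →
    AvoidsRemote dm (Set.range q) → ∀ j, M q j = crMap dm q j}

/-- Harmonicity of a pair of events with respect to a map-form Möbius structure `M`: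
`ln cr₃(u,x,y,z) = 0`. -/
def MapHarmonic (M : (Fin 4 → Circle) → Fin 3 → ℝ) (a b : Event) : Prop :=
  ∃ x y z u : Circle, a.1 = s(x, y) ∧ b.1 = s(z, u) ∧
    Function.Injective ![u, x, y, z] ∧ M ![u, x, y, z] 2 = 0

/-- The 4-tuple `(x₁,x₂,x₃,x₄)` is harmonic with respect to the Möbius structure `M`:
`|x₁x₃|·|x₂x₄| = |x₁x₄|·|x₂x₃|`. -/
def Harm4 (M : MoebiusStructure) (x₁ x₂ x₃ x₄ : Circle) : Prop :=
  ∀ d ∈ M.sems, AvoidsRemote d {x₁, x₂, x₃, x₄} →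
    dR d x₁ x₃ * dR d x₂ x₄ = dR d x₁ x₄ * dR d x₂ x₃

/-- The cross-ratio `cr₁`. -/
noncomputable def cr1R (d : Circle → Circle → ℝ≥0∞) (a b c e : Circle) : ℝ :=
  dR d a c * dR d b e / (dR d a e * dR d b c)

/-- A tuple of points of the circle is in cyclic order. -/
def InCyclicOrder {n : ℕ} (q : Fin n → Circle) : Prop :=
  ∀ i j k l : Fin n, i < j → j < k → k < l → SeparatesPts (q i) (q k) (q j) (q l)

/-- Increment Axiom (I). -/
def AxiomI (M : MoebiusStructure) : Prop :=
  ∀ q : Fin 7 → Circle, Function.Injective q → InCyclicOrder q →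
    Harm4 M (q 0) (q 2) (q 4) (q 5) → Harm4 M (q 1) (q 2) (q 3) (q 5) →
    ∀ d ∈ M.sems, AvoidsRemote d (Set.range q) →
      cr1R d (q 3) (q 4) (q 5) (q 6) < cr1R d (q 0) (q 1) (q 5) (q 6)

/-- The Lambert quadrilateral inequality (LQI). -/
def LQI (line : Event → Set Event) (t : Event → Event → ℝ) : Prop :=
  ∀ a b : Event, ∀ o o' ω ω' : Circle,
    a.1 = s(o, o') → b.1 = s(ω, ω') → StrongCausal a b → SeparatesPts o ω' o' ω →
    ∀ eA eB : Event, eA.1 = s(o, ω) → eB.1 = s(o', ω') →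
    ∀ d₀ : Event, a ∈ line d₀ → b ∈ line d₀ →
    ∀ d : Event, StrictlyBetween d eA eB → d ≠ d₀ → a ∈ line d →
      Fab line t o ω o' ω' d₀ < Fab line t o ω o' ω' d

/-- `g` is an `M`-automorphism: a bijection of the circle preserving the cross-ratios
of the Möbius structure `M`. -/
def MAut (M : MoebiusStructure) (g : Circle ≃ Circle) : Prop :=
  ∀ d ∈ M.sems, ∀ d' ∈ M.sems, ∀ x y z u : Circle,
    x ≠ y → x ≠ z → x ≠ u → y ≠ z → y ≠ u → z ≠ u →
    AvoidsRemote d {x, y, z, u} → AvoidsRemote d' {g x, g y, g z, g u} →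
    dR d' (g x) (g z) * dR d' (g y) (g u) * (dR d x u * dR d y z)
      = dR d x z * dR d y u * (dR d' (g x) (g u) * dR d' (g y) (g z))

theorem map_not_isDiag (g : Circle ≃ Circle) (z : Sym2 Circle) (h : ¬ z.IsDiag) :
    ¬ (z.map g).IsDiag := by
  induction z using Sym2.ind with
  | _ x y =>
    rw [Sym2.map_pair_eq, Sym2.mk_isDiag_iff]
    rw [Sym2.mk_isDiag_iff] at h
    exact fun hg => h (g.injective hg)

/-- The map of events induced by a bijection of the circle. -/
def emap (g : Circle ≃ Circle) (e : Event) : Event :=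
  ⟨e.1.map g, map_not_isDiag g e.1 e.2⟩

end Paper

namespace Paper

section Aux
open Real

/-- The chart `t ↦ x · e^{it}` on the circle. -/
noncomputable def chart (x : Circle) (t : ℝ) : Circle := x * Circle.exp t

lemma chart_continuous (x : Circle) : Continuous (chart x) :=
  continuous_const.mul (map_continuous Circle.exp)

lemma chart_isOpenMap (x : Circle) : IsOpenMap (chart x) :=
  (Homeomorph.mulLeft x).isOpenMap.comp isLocalHomeomorph_circleExp.isOpenMap

lemma chart_zero (x : Circle) : chart x 0 = x := by simp [chart]

lemma chart_two_pi (x : Circle) : chart x (2*π) = x := by simp [chart]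

lemma chart_injOn (x : Circle) : InjOn (chart x) (Ico 0 (2*π)) := by
  rintro s hs t ht h
  have hexp : Circle.exp s = Circle.exp t := mul_left_cancel h
  obtain ⟨n, hn⟩ := AddCommGroup.modEq_iff_zsmul'.1 (Circle.exp_inj.1 hexp)
  have hn' : t - s = (n : ℝ) * (2*π) := by
    simpa [zsmul_eq_mul] using hn
  have hpi := Real.pi_pos
  have h1 : (-1 : ℝ) < (n:ℝ) := by nlinarith [hs.1, hs.2, ht.1, ht.2]
  have h2 : (n:ℝ) < 1 := by nlinarith [hs.1, hs.2, ht.1, ht.2]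
  have h1' : (-1:ℤ) < n := by exact_mod_cast h1
  have h2' : n < 1 := by exact_mod_cast h2
  have : n = 0 := by omega
  rw [this] at hn'
  simp at hn'
  linarith

lemma exists_angle {x z : Circle} (h : z ≠ x) : ∃ t ∈ Ioo 0 (2*π), chart x t = z := by
  set w : Circle := x⁻¹ * z with hw
  have hw1 : w ≠ 1 := by
    intro h1
    apply h
    have := congrArg (x * ·) h1
    simpa [hw, ← mul_assoc] using this
  have hexp : Circle.exp (Complex.arg w) = w := Circle.exp_arg w
  have harg1 : -π < Complex.arg (w : ℂ) := Complex.neg_pi_lt_arg _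
  have harg2 : Complex.arg (w : ℂ) ≤ π := Complex.arg_le_pi _
  have hpi := Real.pi_pos
  have hargne : Complex.arg (w : ℂ) ≠ 0 := by
    intro h0
    apply hw1
    rw [← hexp, h0, Circle.exp_zero]
  rcases lt_or_gt_of_ne hargne with hneg | hpos
  · refine ⟨Complex.arg (w:ℂ) + 2*π, ⟨by linarith, by linarith⟩, ?_⟩
    rw [chart, Circle.exp_add_two_pi, hexp, hw, ← mul_assoc]
    simp
  · refine ⟨Complex.arg (w:ℂ), ⟨hpos, by linarith⟩, ?_⟩
    rw [chart, hexp, hw, ← mul_assoc]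
    simp

/-- One of the two open arcs determined by `x` and `chart x θ`. -/
def arcA (x : Circle) (θ : ℝ) : Set Circle := chart x '' Ioo 0 θ

def arcB (x : Circle) (θ : ℝ) : Set Circle := chart x '' Ioo θ (2*π)

variable {x : Circle} {θ : ℝ}

lemma arcA_open (x : Circle) (θ : ℝ) : IsOpen (arcA x θ) :=
  chart_isOpenMap x _ isOpen_Ioo

lemma arcB_open (x : Circle) (θ : ℝ) : IsOpen (arcB x θ) :=
  chart_isOpenMap x _ isOpen_Ioo

lemma arcA_preconn (x : Circle) (θ : ℝ) : IsPreconnected (arcA x θ) :=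
  (isPreconnected_Ioo).image _ (chart_continuous x).continuousOn

lemma arcB_preconn (x : Circle) (θ : ℝ) : IsPreconnected (arcB x θ) :=
  (isPreconnected_Ioo).image _ (chart_continuous x).continuousOn

lemma chart_mem_arcA_iff (hθ : θ ∈ Ioo 0 (2*π)) {t : ℝ} (ht : t ∈ Ioo 0 (2*π)) :
    chart x t ∈ arcA x θ ↔ t < θ := by
  constructor
  · rintro ⟨s, hs, hst⟩
    have heq : s = t := chart_injOn x ⟨le_of_lt hs.1, lt_trans hs.2 hθ.2⟩ ⟨le_of_lt ht.1, ht.2⟩ hst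
    exact heq ▸ hs.2
  · intro h
    exact ⟨t, ⟨ht.1, h⟩, rfl⟩

lemma chart_mem_arcB_iff (hθ : θ ∈ Ioo 0 (2*π)) {t : ℝ} (ht : t ∈ Ioo 0 (2*π)) :
    chart x t ∈ arcB x θ ↔ θ < t := by
  constructor
  · rintro ⟨s, hs, hst⟩
    have heq : s = t := chart_injOn x ⟨le_of_lt (lt_trans hθ.1 hs.1), hs.2⟩ ⟨le_of_lt ht.1, ht.2⟩ hst
    exact heq ▸ hs.1
  · intro h
    exact ⟨t, ⟨h, ht.2⟩, rfl⟩

lemma chart_ne_x (ht : θ ∈ Ioo 0 (2*π)) : chart x θ ≠ x := by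
  intro h
  have h' : chart x θ = chart x 0 := by rw [chart_zero]; exact h
  have := chart_injOn x ⟨le_of_lt ht.1, ht.2⟩ ⟨le_rfl, by positivity⟩ h'
  linarith [ht.1]

lemma arcA_union_arcB (hθ : θ ∈ Ioo 0 (2*π)) :
    ({x, chart x θ}ᶜ : Set Circle) = arcA x θ ∪ arcB x θ := by
  ext z
  simp only [mem_compl_iff, mem_insert_iff, mem_singleton_iff, mem_union]
  constructor
  · intro hz
    push_neg at hz
    obtain ⟨t, ht, rfl⟩ := exists_angle hz.1
    rcases lt_trichotomy t θ with h | h | h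
    · exact Or.inl ((chart_mem_arcA_iff hθ ht).2 h)
    · exact absurd (h ▸ rfl) hz.2
    · exact Or.inr ((chart_mem_arcB_iff hθ ht).2 h)
  · rintro (⟨t, ht, rfl⟩ | ⟨t, ht, rfl⟩)
    · have ht' : t ∈ Ioo 0 (2*π) := ⟨ht.1, lt_trans ht.2 hθ.2⟩
      rintro (h | h)
      · exact chart_ne_x ht' h
      · have := chart_injOn x ⟨le_of_lt ht'.1, ht'.2⟩ ⟨le_of_lt hθ.1, hθ.2⟩ h
        linarith [ht.2]
    · have ht' : t ∈ Ioo 0 (2*π) := ⟨lt_trans hθ.1 ht.1, ht.2⟩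
      rintro (h | h)
      · exact chart_ne_x ht' h
      · have := chart_injOn x ⟨le_of_lt ht'.1, ht'.2⟩ ⟨le_of_lt hθ.1, hθ.2⟩ h
        linarith [ht.1]

lemma arcA_disjoint_arcB (hθ : θ ∈ Ioo 0 (2*π)) : Disjoint (arcA x θ) (arcB x θ) := by
  rw [Set.disjoint_left]
  rintro z ⟨t, ht, rfl⟩ hz
  have ht' : t ∈ Ioo 0 (2*π) := ⟨ht.1, lt_trans ht.2 hθ.2⟩
  have := (chart_mem_arcB_iff hθ ht').1 hz
  linarith [ht.2]

lemma connCompIn_arcA (hθ : θ ∈ Ioo 0 (2*π)) {z : Circle} (hz : z ∈ arcA x θ) :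
    connectedComponentIn ({x, chart x θ}ᶜ : Set Circle) z = arcA x θ := by
  apply subset_antisymm
  · apply IsPreconnected.subset_left_of_subset_union (arcA_open x θ) (arcB_open x θ)
      (arcA_disjoint_arcB hθ) _ _
    · exact isPreconnected_connectedComponentIn
    · rw [← arcA_union_arcB hθ]
      exact connectedComponentIn_subset _ _
    · refine ⟨z, mem_connectedComponentIn ?_, hz⟩
      rw [arcA_union_arcB hθ]; exact Or.inl hz
  · apply (arcA_preconn x θ).subset_connectedComponentIn hz
    rw [arcA_union_arcB hθ]; exact subset_union_left

lemma connCompIn_arcB (hθ : θ ∈ Ioo 0 (2*π)) {z : Circle} (hz : z ∈ arcB x θ) :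
    connectedComponentIn ({x, chart x θ}ᶜ : Set Circle) z = arcB x θ := by
  apply subset_antisymm
  · apply IsPreconnected.subset_right_of_subset_union (arcA_open x θ) (arcB_open x θ)
      (arcA_disjoint_arcB hθ) _ _
    · exact isPreconnected_connectedComponentIn
    · rw [← arcA_union_arcB hθ]
      exact connectedComponentIn_subset _ _
    · refine ⟨z, mem_connectedComponentIn ?_, hz⟩
      rw [arcA_union_arcB hθ]; exact Or.inr hz
  · apply (arcB_preconn x θ).subset_connectedComponentIn hz
    rw [arcA_union_arcB hθ]; exact subset_union_right

/-- Separation in chart coordinates. -/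
lemma sepChar (hθ : θ ∈ Ioo 0 (2*π)) {s t : ℝ} (hs : s ∈ Ioo 0 (2*π)) (ht : t ∈ Ioo 0 (2*π))
    (hsθ : s ≠ θ) (htθ : t ≠ θ) :
    SeparatesPts x (chart x θ) (chart x s) (chart x t) ↔
      (s < θ ∧ θ < t) ∨ (t < θ ∧ θ < s) := by
  have hsmem : chart x s ∈ ({x, chart x θ}ᶜ : Set Circle) := by
    rw [arcA_union_arcB hθ]
    rcases lt_or_gt_of_ne hsθ with h | h
    · exact Or.inl ((chart_mem_arcA_iff hθ hs).2 h)
    · exact Or.inr ((chart_mem_arcB_iff hθ hs).2 h)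
  have htmem : chart x t ∈ ({x, chart x θ}ᶜ : Set Circle) := by
    rw [arcA_union_arcB hθ]
    rcases lt_or_gt_of_ne htθ with h | h
    · exact Or.inl ((chart_mem_arcA_iff hθ ht).2 h)
    · exact Or.inr ((chart_mem_arcB_iff hθ ht).2 h)
  constructor
  · rintro ⟨-, -, hcomp⟩
    rcases lt_or_gt_of_ne hsθ with hslt | hsgt
    · -- s < θ, component is arcA
      rw [connCompIn_arcA hθ ((chart_mem_arcA_iff hθ hs).2 hslt)] at hcomp
      rcases lt_or_gt_of_ne htθ with htlt | htgt
      · exact absurd ((chart_mem_arcA_iff hθ ht).2 htlt) hcomp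
      · exact Or.inl ⟨hslt, htgt⟩
    · rw [connCompIn_arcB hθ ((chart_mem_arcB_iff hθ hs).2 hsgt)] at hcomp
      rcases lt_or_gt_of_ne htθ with htlt | htgt
      · exact Or.inr ⟨htlt, hsgt⟩
      · exact absurd ((chart_mem_arcB_iff hθ ht).2 htgt) hcomp
  · rintro (⟨h1, h2⟩ | ⟨h1, h2⟩)
    · refine ⟨hsmem, htmem, ?_⟩
      rw [connCompIn_arcA hθ ((chart_mem_arcA_iff hθ hs).2 h1)]
      intro hmem
      have := (chart_mem_arcA_iff hθ ht).1 hmem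
      linarith
    · refine ⟨hsmem, htmem, ?_⟩
      rw [connCompIn_arcB hθ ((chart_mem_arcB_iff hθ hs).2 h2)]
      intro hmem
      have := (chart_mem_arcB_iff hθ ht).1 hmem
      linarith


/-! ### Event and separation helpers -/

lemma event_rep (e : Event) : ∃ p q : Circle, e.1 = s(p, q) := by
  obtain ⟨⟨p, q⟩, h⟩ := Quot.exists_rep e.1
  exact ⟨p, q, h.symm⟩

lemma event_ne {e : Event} {p q : Circle} (h : e.1 = s(p, q)) : p ≠ q := by
  intro hpq
  exact e.2 (by rw [h, hpq]; exact Sym2.mk_isDiag_iff.2 rfl)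

lemma mem_event_iff {e : Event} {p q w : Circle} (h : e.1 = s(p, q)) :
    w ∈ e.1 ↔ w = p ∨ w = q := by rw [h]; exact Sym2.mem_iff

lemma eventPts_eq {e : Event} {p q : Circle} (h : e.1 = s(p, q)) :
    EventPts e = {p, q} := by
  ext w
  simp only [EventPts, mem_setOf_eq, mem_event_iff h, mem_insert_iff, mem_singleton_iff]

lemma sep_swap₁ {x y z u : Circle} (h : SeparatesPts x y z u) : SeparatesPts y x z u := by
  obtain ⟨h1, h2, h3⟩ := h
  rw [Set.pair_comm x y] at h1 h2 h3
  exact ⟨h1, h2, h3⟩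

lemma sep_swap₂ {x y z u : Circle} (h : SeparatesPts x y z u) : SeparatesPts x y u z := by
  obtain ⟨h1, h2, h3⟩ := h
  refine ⟨h2, h1, fun hz => h3 ?_⟩
  rw [← connectedComponentIn_eq hz]
  exact mem_connectedComponentIn h2

lemma sep_ne {x y z u : Circle} (h : SeparatesPts x y z u) : z ≠ u := by
  rintro rfl
  exact h.2.2 (mem_connectedComponentIn h.1)

lemma sep_of_rep {a b : Event} {p q z u : Circle} (ha : a.1 = s(p, q)) (hb : b.1 = s(z, u))
    (h : EventSep a b) : SeparatesPts p q z u := by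
  obtain ⟨p', q', z', u', ha', hb', hsep⟩ := h
  rw [ha] at ha'; rw [hb] at hb'
  rcases Sym2.eq_iff.1 ha' with ⟨rfl, rfl⟩ | ⟨rfl, rfl⟩ <;>
    rcases Sym2.eq_iff.1 hb' with ⟨rfl, rfl⟩ | ⟨rfl, rfl⟩
  · exact hsep
  · exact sep_swap₂ hsep
  · exact sep_swap₁ hsep
  · exact sep_swap₁ (sep_swap₂ hsep)

lemma chart_add (x : Circle) (s t : ℝ) : chart (chart x s) t = chart x (s + t) := by
  simp [chart, Circle.exp_add, mul_assoc]

lemma chart_base (x : Circle) {s : ℝ} (hs : s ∈ Ioo 0 (2*π)) :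
    chart (chart x s) (2*π - s) = x := by
  rw [chart_add]
  have : s + (2*π - s) = 2*π := by ring
  rw [this, chart_two_pi]

/-- Symmetry of the separation relation: core case in coordinates. -/
lemma sep_symm_aux {x : Circle} {θ s t : ℝ} (hθ : θ ∈ Ioo 0 (2*π))
    (hs : s ∈ Ioo 0 (2*π)) (ht : t ∈ Ioo 0 (2*π)) (hst : s < θ ∧ θ < t) :
    SeparatesPts (chart x s) (chart x t) x (chart x θ) := by
  set z := chart x s with hz
  have hu : chart x t = chart z (t - s) := by rw [chart_add]; ring_nf
  have hp : x = chart z (2*π - s) := (chart_base x hs).symm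
  have hq : chart x θ = chart z (θ - s) := by rw [chart_add]; ring_nf
  have hθ' : t - s ∈ Ioo 0 (2*π) := ⟨by linarith [hst.1, hst.2], by linarith [hs.1, ht.2]⟩
  have hs' : 2*π - s ∈ Ioo 0 (2*π) := ⟨by linarith [hs.2], by linarith [hs.1]⟩
  have ht' : θ - s ∈ Ioo 0 (2*π) := ⟨by linarith [hst.1], by linarith [hs.1, hθ.2]⟩
  rw [hu, hq, hp]
  refine (sepChar hθ' hs' ht' ?_ ?_).2 (Or.inr ⟨by linarith [hst.2], by linarith [ht.2]⟩)
  · intro h; have : t = 2*π := by linarith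
    linarith [ht.2]
  · intro h; have : θ = t := by linarith
    linarith [hst.2]

lemma compl_singleton_eq (p : Circle) : ({p} : Set Circle)ᶜ = chart p '' Ioo 0 (2*π) := by
  ext z
  simp only [mem_compl_iff, mem_singleton_iff, mem_image]
  constructor
  · intro hz
    obtain ⟨t, ht, h⟩ := exists_angle hz
    exact ⟨t, ht, h⟩
  · rintro ⟨t, ht, rfl⟩
    exact chart_ne_x ht

lemma sep_ne' {p q z u : Circle} (h : SeparatesPts p q z u) : p ≠ q := by
  rintro rfl
  have hconn : IsPreconnected ({p} : Set Circle)ᶜ := by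
    rw [compl_singleton_eq]
    exact isPreconnected_Ioo.image _ (chart_continuous p).continuousOn
  have h1 : z ∈ ({p} : Set Circle)ᶜ := by simpa using h.1
  have h2 : u ∈ ({p} : Set Circle)ᶜ := by simpa using h.2.1
  apply h.2.2
  have : ({p, p} : Set Circle) = {p} := by simp
  rw [this, hconn.connectedComponentIn h1]
  exact h2

/-- Symmetry of separation. -/
lemma sep_symm {p q z u : Circle} (h : SeparatesPts p q z u) : SeparatesPts z u p q := by
  have hzp : z ≠ p := fun h' => h.1 (by simp [h'])
  have hzq : z ≠ q := fun h' => h.1 (by simp [h'])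
  have hup : u ≠ p := fun h' => h.2.1 (by simp [h'])
  have huq : u ≠ q := fun h' => h.2.1 (by simp [h'])
  have hpq : p ≠ q := sep_ne' h
  obtain ⟨θ, hθ, hq⟩ := exists_angle hpq.symm
  obtain ⟨s, hs, hz⟩ := exists_angle hzp
  obtain ⟨t, ht, hu⟩ := exists_angle hup
  rw [← hq, ← hz, ← hu] at h ⊢
  have hsθ : s ≠ θ := by rintro rfl; rw [hz] at hq; exact hzq hq
  have htθ : t ≠ θ := by rintro rfl; rw [hu] at hq; exact huq hq
  rcases (sepChar hθ hs ht hsθ htθ).1 h with hc | hc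
  · exact sep_symm_aux hθ hs ht hc
  · exact sep_swap₁ (sep_symm_aux hθ ht hs hc)

/-! ### Topology of `Sym2` -/

lemma sym2_saturation {α : Type*} (D : Set (α × α)) :
    Quot.mk (Sym2.Rel α) ⁻¹' (Quot.mk (Sym2.Rel α) '' D) = D ∪ Prod.swap '' D := by
  ext ⟨a, b⟩
  simp only [mem_preimage, mem_image, mem_union]
  constructor
  · rintro ⟨⟨c, d⟩, hcd, h⟩
    rcases (Sym2.mk_eq_mk_iff (p := (c, d)) (q := (a, b))).1 h with h' | h'
    · left; rwa [← h']
    · right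
      refine ⟨(c, d), hcd, ?_⟩
      have h'' : c = b ∧ d = a := by simpa [Prod.ext_iff] using h'
      have : ((a, b) : α × α) = (d, c) := by
        rw [h''.1, h''.2]
      rw [this]
      rfl
  · rintro (h | ⟨⟨c, d⟩, hcd, h⟩)
    · exact ⟨(a, b), h, rfl⟩
    · refine ⟨(c, d), hcd, ?_⟩
      have : ((a, b) : α × α) = (d, c) := by
        simpa [Prod.ext_iff, eq_comm] using h.symm
      rw [this, Sym2.mk_eq_mk_iff (p := (c, d)) (q := (d, c))]
      right; rfl

lemma sym2_mk_isOpenMap {α : Type*} [TopologicalSpace α] :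
    IsOpenMap (Quot.mk (Sym2.Rel α) : α × α → Sym2 α) := by
  intro O hO
  rw [← (isQuotientMap_quot_mk (r := Sym2.Rel α)).isOpen_preimage]
  rw [show (Quot.mk (Sym2.Rel α) : α × α → Sym2 α) = Quot.mk (Sym2.Rel α) from rfl, sym2_saturation]
  refine hO.union ?_
  have := (Homeomorph.prodComm α α).isOpenMap O hO
  simpa [Homeomorph.prodComm, Set.image] using this

lemma sym2_mk_continuous {α : Type*} [TopologicalSpace α] :
    Continuous (Quot.mk (Sym2.Rel α) : α × α → Sym2 α) := continuous_quot_mk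

/-! ### Lines and the partner function -/

section LineAux

variable {line : Event → Set Event}

lemma proj_spec (h4 : AxH4 line) {e : Event} {x : Circle} (hx : x ∉ EventPts e) :
    proj line e x ∈ line e ∧ x ∈ (proj line e x).1 := by
  have h := h4 e x hx
  have hex : ∃ a, a ∈ line e ∧ x ∈ a.1 := h.exists
  unfold proj
  rw [dif_pos hex]
  exact hex.choose_spec

lemma proj_eq (h4 : AxH4 line) {e a : Event} {x : Circle} (hx : x ∉ EventPts e)
    (ha : a ∈ line e) (hxa : x ∈ a.1) : a = proj line e x := by
  obtain ⟨hl, hm⟩ := proj_spec h4 hx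
  exact (h4 e x hx).unique ⟨ha, hxa⟩ ⟨hl, hm⟩

lemma line_sep (h2 : AxH2 line) {e a : Event} (ha : a ∈ line e) {p q x y : Circle}
    (hap : a.1 = s(p, q)) (hexy : e.1 = s(x, y)) : SeparatesPts x y p q :=
  sep_symm (sep_of_rep hap hexy (h2 e a ha))

lemma line_pt_not_mem (h2 : AxH2 line) {e a : Event} (ha : a ∈ line e) {w : Circle}
    (hw : w ∈ a.1) : w ∉ EventPts e := by
  obtain ⟨p, q, hap⟩ := event_rep a
  obtain ⟨xx, yy, hexy⟩ := event_rep e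
  have hsep := line_sep h2 ha hap hexy
  rw [eventPts_eq hexy]
  rcases (mem_event_iff hap).1 hw with rfl | rfl
  · intro hmem
    rcases hmem with h | h
    · exact hsep.1 (by simp [h])
    · exact hsep.1 (by simp [h])
  · intro hmem
    rcases hmem with h | h
    · exact hsep.2.1 (by simp [h])
    · exact hsep.2.1 (by simp [h])

variable {e : Event} {x : Circle} {θ : ℝ}

lemma chart_not_mem_eventPts (hθ : θ ∈ Ioo 0 (2*π)) (he : e.1 = s(x, chart x θ))
    {s : ℝ} (hs : s ∈ Ioo 0 (2*π)) (hsθ : s ≠ θ) : chart x s ∉ EventPts e := by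
  rw [eventPts_eq he]
  rintro (h | h)
  · exact chart_ne_x hs h
  · exact hsθ (chart_injOn x ⟨le_of_lt hs.1, hs.2⟩ ⟨le_of_lt hθ.1, hθ.2⟩ h)

lemma partner_exists (h2 : AxH2 line) (h4 : AxH4 line) (hθ : θ ∈ Ioo 0 (2*π))
    (he : e.1 = s(x, chart x θ)) {s : ℝ} (hs : s ∈ Ioo 0 θ) :
    ∃ t ∈ Ioo θ (2*π), (proj line e (chart x s)).1 = s(chart x s, chart x t) := by
  have hs2 : s ∈ Ioo 0 (2*π) := ⟨hs.1, lt_trans hs.2 hθ.2⟩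
  have hz : chart x s ∉ EventPts e := chart_not_mem_eventPts hθ he hs2 (ne_of_lt hs.2)
  obtain ⟨hal, ham⟩ := proj_spec h4 hz
  set a := proj line e (chart x s) with ha
  obtain ⟨p, q, hap⟩ := event_rep a
  -- normalize so that the first entry is `chart x s`
  have hrep : ∃ w, a.1 = s(chart x s, w) := by
    rcases (mem_event_iff hap).1 ham with rfl | rfl
    · exact ⟨q, hap⟩
    · exact ⟨p, by rw [hap, Sym2.eq_swap]⟩
  obtain ⟨w, haw⟩ := hrep
  have hsep : SeparatesPts x (chart x θ) (chart x s) w := line_sep h2 hal haw he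
  have hwx : w ≠ x := fun h => hsep.2.1 (by simp [h])
  obtain ⟨t, ht, hwt⟩ := exists_angle hwx
  have htθ : t ≠ θ := by
    rintro rfl
    exact hsep.2.1 (by simp [hwt])
  rw [← hwt] at hsep
  rcases (sepChar hθ hs2 ht (ne_of_lt hs.2) htθ).1 hsep with hc | hc
  · exact ⟨t, ⟨hc.2, ht.2⟩, by rw [haw, hwt]⟩
  · exact absurd hc.2 (not_lt.2 (le_of_lt hs.2))

/-- The partner-angle function of the timelike line `h_e` in the chart based at `x`. -/
noncomputable def gfun (line : Event → Set Event) (e : Event) (x : Circle) (θ : ℝ)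
    (s : ℝ) : ℝ :=
  letI := Classical.propDecidable
    (∃ t, t ∈ Ioo θ (2*π) ∧ (proj line e (chart x s)).1 = s(chart x s, chart x t))
  if h : ∃ t, t ∈ Ioo θ (2*π) ∧ (proj line e (chart x s)).1 = s(chart x s, chart x t) then
    h.choose else 0

lemma gfun_spec (h2 : AxH2 line) (h4 : AxH4 line) (hθ : θ ∈ Ioo 0 (2*π))
    (he : e.1 = s(x, chart x θ)) {s : ℝ} (hs : s ∈ Ioo 0 θ) :
    gfun line e x θ s ∈ Ioo θ (2*π) ∧
      (proj line e (chart x s)).1 = s(chart x s, chart x (gfun line e x θ s)) := by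
  have hex := partner_exists h2 h4 hθ he hs
  have hex' : ∃ t, t ∈ Ioo θ (2*π) ∧
      (proj line e (chart x s)).1 = s(chart x s, chart x t) := by
    obtain ⟨t, h1, h2'⟩ := hex; exact ⟨t, h1, h2'⟩
  unfold gfun
  rw [dif_pos hex']
  exact hex'.choose_spec

lemma proj_mem_line (h4 : AxH4 line) (hθ : θ ∈ Ioo 0 (2*π)) (he : e.1 = s(x, chart x θ))
    {s : ℝ} (hs : s ∈ Ioo 0 θ) : proj line e (chart x s) ∈ line e :=
  (proj_spec h4 (chart_not_mem_eventPts hθ he ⟨hs.1, lt_trans hs.2 hθ.2⟩ (ne_of_lt hs.2))).1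

/-- Any point of the event `proj line e (chart x s)` is `chart x s` or the partner. -/
lemma proj_pts (h2 : AxH2 line) (h4 : AxH4 line) (hθ : θ ∈ Ioo 0 (2*π))
    (he : e.1 = s(x, chart x θ)) {s : ℝ} (hs : s ∈ Ioo 0 θ) {w : Circle}
    (hw : w ∈ (proj line e (chart x s)).1) :
    w = chart x s ∨ w = chart x (gfun line e x θ s) :=
  (mem_event_iff (gfun_spec h2 h4 hθ he hs).2).1 hw

/-- Uniqueness of the partner in the far arc. -/
lemma gfun_eq_of_mem (h2 : AxH2 line) (h4 : AxH4 line) (hθ : θ ∈ Ioo 0 (2*π))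
    (he : e.1 = s(x, chart x θ)) {s t : ℝ} (hs : s ∈ Ioo 0 θ) (ht : t ∈ Ioo θ (2*π))
    (hmem : chart x t ∈ (proj line e (chart x s)).1) : gfun line e x θ s = t := by
  obtain ⟨hg, hrep⟩ := gfun_spec h2 h4 hθ he hs
  rcases (mem_event_iff hrep).1 hmem with h | h
  · exfalso
    have := chart_injOn x ⟨le_of_lt (lt_trans hθ.1 ht.1), ht.2⟩
      ⟨le_of_lt hs.1, lt_trans hs.2 hθ.2⟩ h
    linarith [hs.2, ht.1]
  · exact (chart_injOn x ⟨le_of_lt (lt_trans hθ.1 ht.1), ht.2⟩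
      ⟨le_of_lt (lt_trans hθ.1 hg.1), hg.2⟩ h).symm

lemma proj_eq_proj (h2 : AxH2 line) (h4 : AxH4 line) (hθ : θ ∈ Ioo 0 (2*π))
    (he : e.1 = s(x, chart x θ)) {s s' : ℝ} (hs : s ∈ Ioo 0 θ) (hs' : s' ∈ Ioo 0 θ)
    (h : gfun line e x θ s = gfun line e x θ s') : s = s' := by
  by_contra hne
  obtain ⟨hg, hrep⟩ := gfun_spec h2 h4 hθ he hs
  obtain ⟨hg', hrep'⟩ := gfun_spec h2 h4 hθ he hs'
  -- the two events both contain the far point, hence are equal by h4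
  have hfar : chart x (gfun line e x θ s) ∉ EventPts e :=
    chart_not_mem_eventPts hθ he ⟨lt_trans hθ.1 hg.1, hg.2⟩ (ne_of_gt hg.1)
  have h1 : proj line e (chart x s) = proj line e (chart x (gfun line e x θ s)) :=
    proj_eq h4 hfar (proj_mem_line h4 hθ he hs) (by rw [hrep]; simp)
  have h2' : proj line e (chart x s') = proj line e (chart x (gfun line e x θ s)) :=
    proj_eq h4 hfar (proj_mem_line h4 hθ he hs') (by rw [hrep', ← h]; simp)
  have heq : proj line e (chart x s) = proj line e (chart x s') := h1.trans h2'.symm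
  have : chart x s' ∈ (proj line e (chart x s)).1 := by rw [heq, hrep']; simp
  rcases (mem_event_iff hrep).1 this with hcs | hcs
  · exact hne (chart_injOn x ⟨le_of_lt hs'.1, lt_trans hs'.2 hθ.2⟩
      ⟨le_of_lt hs.1, lt_trans hs.2 hθ.2⟩ hcs).symm
  · have := chart_injOn x ⟨le_of_lt hs'.1, lt_trans hs'.2 hθ.2⟩
      ⟨le_of_lt (lt_trans hθ.1 hg.1), hg.2⟩ hcs
    linarith [hs'.2, hg.1]

/-- The partner function is strictly antitone. -/
lemma gfun_anti (h2 : AxH2 line) (h3 : AxH3 line) (h4 : AxH4 line) (hθ : θ ∈ Ioo 0 (2*π))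
    (he : e.1 = s(x, chart x θ)) {s s' : ℝ} (hs : s ∈ Ioo 0 θ) (hs' : s' ∈ Ioo 0 θ)
    (hlt : s < s') : gfun line e x θ s' < gfun line e x θ s := by
  obtain ⟨hg, hrep⟩ := gfun_spec h2 h4 hθ he hs
  obtain ⟨hg', hrep'⟩ := gfun_spec h2 h4 hθ he hs'
  set t := gfun line e x θ s with hts
  set t' := gfun line e x θ s' with hts'
  have htne : t' ≠ t := fun h => (ne_of_lt hlt) (proj_eq_proj h2 h4 hθ he hs hs' h.symm)
  rcases lt_or_gt_of_ne htne with h | h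
  · exact h
  exfalso
  -- causality is violated
  have hcausal : Causal (proj line e (chart x s)) (proj line e (chart x s')) :=
    h3 e _ _ (proj_mem_line h4 hθ he hs) (proj_mem_line h4 hθ he hs')
  apply hcausal
  refine ⟨chart x s, chart x t, chart x s', chart x t', hrep, hrep', ?_⟩
  -- rebase at `chart x s`
  have h1 : chart x t = chart (chart x s) (t - s) := by rw [chart_add]; ring_nf
  have h2' : chart x s' = chart (chart x s) (s' - s) := by rw [chart_add]; ring_nf
  have h3' : chart x t' = chart (chart x s) (t' - s) := by rw [chart_add]; ring_nf
  rw [h1, h2', h3']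
  have hθ0 : t - s ∈ Ioo 0 (2*π) := ⟨by linarith [hs.2, hg.1, hθ.1], by linarith [hs.1, hg.2]⟩
  have hs0 : s' - s ∈ Ioo 0 (2*π) := ⟨by linarith, by linarith [hs.1, hs'.2, hθ.2]⟩
  have ht0 : t' - s ∈ Ioo 0 (2*π) :=
    ⟨by linarith [hs.2, hg'.1, hθ.1], by linarith [hs.1, hg'.2]⟩
  refine (sepChar hθ0 hs0 ht0 ?_ ?_).2 (Or.inl ⟨by linarith [hs'.2, hg.1], by linarith⟩)
  · intro hx; have : s' = t := by linarith
    linarith [hs'.2, hg.1]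
  · intro hx; exact htne (by linarith)

/-- The partner function is surjective onto the far arc. -/
lemma gfun_surj (h2 : AxH2 line) (h4 : AxH4 line) (hθ : θ ∈ Ioo 0 (2*π))
    (he : e.1 = s(x, chart x θ)) {t : ℝ} (ht : t ∈ Ioo θ (2*π)) :
    ∃ s ∈ Ioo 0 θ, gfun line e x θ s = t := by
  have ht2 : t ∈ Ioo 0 (2*π) := ⟨lt_trans hθ.1 ht.1, ht.2⟩
  have hz : chart x t ∉ EventPts e := chart_not_mem_eventPts hθ he ht2 (ne_of_gt ht.1)
  obtain ⟨hbl, hbm⟩ := proj_spec h4 hz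
  set b := proj line e (chart x t) with hb
  obtain ⟨p, q, hbp⟩ := event_rep b
  have hrep : ∃ w, b.1 = s(chart x t, w) := by
    rcases (mem_event_iff hbp).1 hbm with rfl | rfl
    · exact ⟨q, hbp⟩
    · exact ⟨p, by rw [hbp, Sym2.eq_swap]⟩
  obtain ⟨w, hbw⟩ := hrep
  have hsep : SeparatesPts x (chart x θ) (chart x t) w := line_sep h2 hbl hbw he
  have hwx : w ≠ x := fun h => hsep.2.1 (by simp [h])
  obtain ⟨r, hr, hwr⟩ := exists_angle hwx
  have hrθ : r ≠ θ := by
    rintro rfl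
    exact hsep.2.1 (by simp [hwr])
  rw [← hwr] at hsep
  rcases (sepChar hθ ht2 hr (ne_of_gt ht.1) hrθ).1 hsep with hc | hc
  · exact absurd hc.1 (not_lt.2 (le_of_lt ht.1))
  · have hrmem : r ∈ Ioo 0 θ := ⟨hr.1, hc.1⟩
    refine ⟨r, hrmem, ?_⟩
    -- `b` goes through `chart x r`, hence `b = proj line e (chart x r)`
    have hrnot : chart x r ∉ EventPts e :=
      chart_not_mem_eventPts hθ he ⟨hr.1, hr.2⟩ hrθ
    have hbeq : b = proj line e (chart x r) :=
      proj_eq h4 hrnot hbl (by rw [hbw, ← hwr]; simp)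
    apply gfun_eq_of_mem h2 h4 hθ he hrmem ht
    rw [← hbeq, hbw]; simp

/-- Every event of the line is a projection from the near arc. -/
lemma line_mem_eq_proj (h2 : AxH2 line) (h4 : AxH4 line) (hθ : θ ∈ Ioo 0 (2*π))
    (he : e.1 = s(x, chart x θ)) {a : Event} (ha : a ∈ line e) :
    ∃ s ∈ Ioo 0 θ, a = proj line e (chart x s) := by
  obtain ⟨p, q, hap⟩ := event_rep a
  have hsep : SeparatesPts x (chart x θ) p q := line_sep h2 ha hap he
  have hpx : p ≠ x := fun h => hsep.1 (by simp [h])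
  have hqx : q ≠ x := fun h => hsep.2.1 (by simp [h])
  obtain ⟨sp, hsp, hps⟩ := exists_angle hpx
  obtain ⟨sq, hsq, hqs⟩ := exists_angle hqx
  have hspθ : sp ≠ θ := by rintro rfl; exact hsep.1 (by simp [hps])
  have hsqθ : sq ≠ θ := by rintro rfl; exact hsep.2.1 (by simp [hqs])
  rw [← hps, ← hqs] at hsep hap
  rcases (sepChar hθ hsp hsq hspθ hsqθ).1 hsep with hc | hc
  · refine ⟨sp, ⟨hsp.1, hc.1⟩, ?_⟩
    exact proj_eq h4 (chart_not_mem_eventPts hθ he hsp hspθ) ha (by rw [hap]; simp)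
  · refine ⟨sq, ⟨hsq.1, hc.1⟩, ?_⟩
    exact proj_eq h4 (chart_not_mem_eventPts hθ he hsq hsqθ) ha (by rw [hap]; simp)

/-! ### The extended partner function and its continuity -/

/-- Extension of the partner function to the closed interval. -/
noncomputable def gext (line : Event → Set Event) (e : Event) (x : Circle) (θ : ℝ)
    (s : ℝ) : ℝ :=
  if s ≤ 0 then 2*π else if s < θ then gfun line e x θ s else θ

lemma gext_zero : gext line e x θ 0 = 2*π := by simp [gext]

lemma gext_theta (hθ : 0 < θ) : gext line e x θ θ = θ := by
  simp [gext, not_le.2 hθ, lt_irrefl]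

lemma gext_of_mem {s : ℝ} (hs : s ∈ Ioo 0 θ) : gext line e x θ s = gfun line e x θ s := by
  simp [gext, not_le.2 hs.1, hs.2]

lemma gext_mem (h2 : AxH2 line) (h4 : AxH4 line) (hθ : θ ∈ Ioo 0 (2*π))
    (he : e.1 = s(x, chart x θ)) {s : ℝ} (hs : s ∈ Icc 0 θ) :
    gext line e x θ s ∈ Icc θ (2*π) := by
  rcases eq_or_lt_of_le hs.1 with h0 | h0
  · rw [← h0, gext_zero]; exact ⟨le_of_lt hθ.2, le_rfl⟩
  rcases eq_or_lt_of_le hs.2 with hθ' | hθ'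
  · rw [hθ', gext_theta hθ.1]; exact ⟨le_rfl, le_of_lt hθ.2⟩
  rw [gext_of_mem ⟨h0, hθ'⟩]
  have := (gfun_spec h2 h4 hθ he ⟨h0, hθ'⟩).1
  exact ⟨le_of_lt this.1, le_of_lt this.2⟩

lemma gext_anti (h2 : AxH2 line) (h3 : AxH3 line) (h4 : AxH4 line) (hθ : θ ∈ Ioo 0 (2*π))
    (he : e.1 = s(x, chart x θ)) : StrictAntiOn (gext line e x θ) (Icc 0 θ) := by
  intro a ha b hb hab
  rcases eq_or_lt_of_le ha.1 with h0 | h0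
  · rw [← h0, gext_zero]
    rcases eq_or_lt_of_le hb.2 with hθ' | hθ'
    · rw [hθ', gext_theta hθ.1]; exact hθ.2
    · have hb' : b ∈ Ioo 0 θ := ⟨by rw [← h0] at hab; exact hab, hθ'⟩
      rw [gext_of_mem hb']
      exact (gfun_spec h2 h4 hθ he hb').1.2
  rcases eq_or_lt_of_le hb.2 with hθ' | hθ'
  · rw [hθ', gext_theta hθ.1, gext_of_mem ⟨h0, hθ' ▸ hab⟩]
    exact (gfun_spec h2 h4 hθ he ⟨h0, hθ' ▸ hab⟩).1.1
  · rw [gext_of_mem ⟨h0, lt_trans hab hθ'⟩, gext_of_mem ⟨lt_trans h0 hab, hθ'⟩]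
    exact gfun_anti h2 h3 h4 hθ he ⟨h0, lt_trans hab hθ'⟩ ⟨lt_trans h0 hab, hθ'⟩ hab

lemma gext_surjOn (h2 : AxH2 line) (h4 : AxH4 line) (hθ : θ ∈ Ioo 0 (2*π))
    (he : e.1 = s(x, chart x θ)) :
    SurjOn (gext line e x θ) (Icc 0 θ) (Icc θ (2*π)) := by
  intro t ht
  rcases eq_or_lt_of_le ht.1 with h0 | h0
  · exact ⟨θ, ⟨le_of_lt hθ.1, le_rfl⟩, by rw [gext_theta hθ.1, h0]⟩
  rcases eq_or_lt_of_le ht.2 with hπ | hπ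
  · exact ⟨0, ⟨le_rfl, le_of_lt hθ.1⟩, by rw [gext_zero, hπ]⟩
  obtain ⟨u, hu, hut⟩ := gfun_surj h2 h4 hθ he ⟨h0, hπ⟩
  exact ⟨u, ⟨le_of_lt hu.1, le_of_lt hu.2⟩, by rw [gext_of_mem hu, hut]⟩

lemma gext_continuousOn (h2 : AxH2 line) (h3 : AxH3 line) (h4 : AxH4 line)
    (hθ : θ ∈ Ioo 0 (2*π)) (he : e.1 = s(x, chart x θ)) :
    ContinuousOn (gext line e x θ) (Icc 0 θ) := by
  haveI : OrdConnected (Icc (0:ℝ) θ) := ordConnected_Icc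
  haveI : OrdConnected (Icc θ (2*π)) := ordConnected_Icc
  set G : Icc (0:ℝ) θ → (Icc θ (2*π))ᵒᵈ :=
    fun s => OrderDual.toDual ⟨gext line e x θ s.1, gext_mem h2 h4 hθ he s.2⟩ with hG
  have hmono : StrictMono G := by
    intro a b hab
    have : gext line e x θ b.1 < gext line e x θ a.1 :=
      gext_anti h2 h3 h4 hθ he a.2 b.2 (Subtype.coe_lt_coe.2 hab)
    exact this
  have hsurj : Function.Surjective G := by
    intro t
    obtain ⟨u, hu, hut⟩ := gext_surjOn h2 h4 hθ he (OrderDual.ofDual t).2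
    refine ⟨⟨u, hu⟩, ?_⟩
    show OrderDual.toDual _ = t
    have : (⟨gext line e x θ u, gext_mem h2 h4 hθ he hu⟩ : Icc θ (2*π))
        = OrderDual.ofDual t := Subtype.ext hut
    rw [this]
    rfl
  have hcont : Continuous G := by
    have h1 := (StrictMono.orderIsoOfSurjective G hmono hsurj).toHomeomorph.continuous
    have h2c : ⇑(StrictMono.orderIsoOfSurjective G hmono hsurj).toHomeomorph = G := by
      rw [OrderIso.coe_toHomeomorph]
      exact StrictMono.coe_orderIsoOfSurjective G hmono hsurj
    rwa [h2c] at h1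
  rw [continuousOn_iff_continuous_restrict]
  have : domRestrict (Icc 0 θ) (gext line e x θ)
      = (fun t : (Icc θ (2*π))ᵒᵈ => (OrderDual.ofDual t).1) ∘ G := rfl
  rw [this]
  exact (continuous_subtype_val.comp continuous_ofDual).comp hcont

/-- The closure of a timelike line in `Sym2 Circle`, chart version. -/
lemma line_closure_chart (h2 : AxH2 line) (h3 : AxH3 line) (h4 : AxH4 line)
    (hθ : θ ∈ Ioo 0 (2*π)) (he : e.1 = s(x, chart x θ)) :
    closure (Subtype.val '' line e : Set (Sym2 Circle))
      = (Subtype.val '' line e) ∪ {Sym2.diag x, Sym2.diag (chart x θ)} := by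
  set R : ℝ → Circle × Circle := fun u => (chart x u, chart x (gext line e x θ u)) with hR
  have hRcont : ContinuousOn R (Icc 0 θ) :=
    ((chart_continuous x).continuousOn).prodMk
      ((chart_continuous x).comp_continuousOn (gext_continuousOn h2 h3 h4 hθ he))
  have hMR : ContinuousOn (Quot.mk (Sym2.Rel Circle) ∘ R) (Icc 0 θ) :=
    sym2_mk_continuous.comp_continuousOn hRcont
  have himg : (Quot.mk (Sym2.Rel Circle) ∘ R) '' Ioo 0 θ = Subtype.val '' line e := by
    apply subset_antisymm
    · rintro _ ⟨u, hu, rfl⟩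
      have hspec := gfun_spec h2 h4 hθ he hu
      refine ⟨proj line e (chart x u), proj_mem_line h4 hθ he hu, ?_⟩
      show (proj line e (chart x u)).1 = Quot.mk (Sym2.Rel Circle) (R u)
      rw [hspec.2, hR]
      simp only [gext_of_mem hu]
    · rintro _ ⟨a, ha, rfl⟩
      obtain ⟨u, hu, rfl⟩ := line_mem_eq_proj h2 h4 hθ he ha
      refine ⟨u, hu, ?_⟩
      show Quot.mk (Sym2.Rel Circle) (R u) = _
      rw [(gfun_spec h2 h4 hθ he hu).2, hR]
      simp only [gext_of_mem hu]
  have hIcc : Icc (0:ℝ) θ = Ioo 0 θ ∪ {0, θ} := by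
    ext u
    simp only [mem_Icc, mem_Ioo, mem_union, mem_insert_iff, mem_singleton_iff]
    constructor
    · rintro ⟨hu1, hu2⟩
      rcases eq_or_lt_of_le hu1 with h | h
      · exact Or.inr (Or.inl h.symm)
      rcases eq_or_lt_of_le hu2 with h' | h'
      · exact Or.inr (Or.inr h')
      · exact Or.inl ⟨h, h'⟩
    · rintro (⟨hu1, hu2⟩ | h | h)
      · exact ⟨le_of_lt hu1, le_of_lt hu2⟩
      · rw [h]; exact ⟨le_rfl, le_of_lt hθ.1⟩
      · rw [h]; exact ⟨le_of_lt hθ.1, le_rfl⟩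
  have hend : (Quot.mk (Sym2.Rel Circle) ∘ R) '' ({0, θ} : Set ℝ)
      = {Sym2.diag x, Sym2.diag (chart x θ)} := by
    rw [image_pair]
    have hR0 : R 0 = (x, x) := by
      rw [hR]; simp only [gext_zero, chart_zero, chart_two_pi]
    have hRθ : R θ = (chart x θ, chart x θ) := by
      rw [hR]; simp only [gext_theta hθ.1]
    have e0 : (Quot.mk (Sym2.Rel Circle) ∘ R) 0 = Sym2.diag x := by
      show Quot.mk (Sym2.Rel Circle) (R 0) = _
      rw [hR0]; rfl
    have eθ : (Quot.mk (Sym2.Rel Circle) ∘ R) θ = Sym2.diag (chart x θ) := by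
      show Quot.mk (Sym2.Rel Circle) (R θ) = _
      rw [hRθ]; rfl
    rw [e0, eθ]
  set K := (Quot.mk (Sym2.Rel Circle) ∘ R) '' Icc 0 θ with hK
  have hKeq : K = (Subtype.val '' line e) ∪ {Sym2.diag x, Sym2.diag (chart x θ)} := by
    rw [hK, hIcc, image_union, himg, hend]
  have hKclosed : IsClosed K := by
    have hDcomp : IsCompact (R '' Icc 0 θ) := isCompact_Icc.image_of_continuousOn hRcont
    have hKmk : K = Quot.mk (Sym2.Rel Circle) '' (R '' Icc 0 θ) := by rw [hK, image_comp]
    rw [hKmk, ← (isQuotientMap_quot_mk (r := Sym2.Rel Circle)).isClosed_preimage,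
      show (Quot.mk (Sym2.Rel Circle) : Circle × Circle → Sym2 Circle) = Quot.mk (Sym2.Rel Circle) from rfl,
      sym2_saturation]
    exact (hDcomp.union (hDcomp.image continuous_swap)).isClosed
  have hsub : closure (Subtype.val '' line e : Set (Sym2 Circle)) ⊆ K :=
    closure_minimal (by rw [hKeq]; exact subset_union_left) hKclosed
  have hsup : K ⊆ closure (Subtype.val '' line e : Set (Sym2 Circle)) := by
    rw [← himg, hK]
    have hcl : Icc (0:ℝ) θ = closure (Ioo 0 θ) := (closure_Ioo (ne_of_lt hθ.1)).symm
    rw [hcl]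
    exact ContinuousOn.image_closure (by rw [← hcl]; exact hMR)
  rw [← hKeq]
  exact subset_antisymm hsub hsup

/-- A timelike line is homeomorphic to `ℝ`, chart version. -/
lemma line_homeo (h2 : AxH2 line) (h3 : AxH3 line) (h4 : AxH4 line)
    (hθ : θ ∈ Ioo 0 (2*π)) (he : e.1 = s(x, chart x θ)) :
    Nonempty (↥(line e) ≃ₜ ℝ) := by
  have hπ := Real.pi_pos
  set Φ : ↥(Ioo 0 θ) → ↥(line e) :=
    fun u => ⟨proj line e (chart x u.1), proj_mem_line h4 hθ he u.2⟩ with hΦ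
  have hval : ∀ u : ↥(Ioo 0 θ), ((Φ u : Event) : Sym2 Circle)
      = Quot.mk (Sym2.Rel Circle) (chart x u.1, chart x (gfun line e x θ u.1)) := by
    intro u; exact (gfun_spec h2 h4 hθ he u.2).2
  have hgcont : Continuous fun u : ↥(Ioo 0 θ) => gfun line e x θ u.1 := by
    have h1 : ContinuousOn (gext line e x θ) (Ioo 0 θ) :=
      (gext_continuousOn h2 h3 h4 hθ he).mono Ioo_subset_Icc_self
    have h2' : Continuous (domRestrict (Ioo 0 θ) (gext line e x θ)) :=
      continuousOn_iff_continuous_restrict.1 h1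
    have h3' : domRestrict (Ioo 0 θ) (gext line e x θ)
        = fun u : ↥(Ioo 0 θ) => gfun line e x θ u.1 := by
      funext u; exact gext_of_mem u.2
    rwa [h3'] at h2'
  have hcont : Continuous Φ := by
    apply continuous_induced_rng.2
    apply continuous_induced_rng.2
    have heq : (Subtype.val ∘ (Subtype.val ∘ Φ)) = fun u : ↥(Ioo 0 θ) =>
        Quot.mk (Sym2.Rel Circle) (chart x u.1, chart x (gfun line e x θ u.1)) := funext hval
    show Continuous (Subtype.val ∘ (Subtype.val ∘ Φ))
    rw [heq]
    exact sym2_mk_continuous.comp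
      (((chart_continuous x).comp continuous_subtype_val).prodMk
        ((chart_continuous x).comp hgcont))
  have hinj : Function.Injective Φ := by
    intro u v huv
    have hpp : proj line e (chart x u.1) = proj line e (chart x v.1) :=
      congrArg Subtype.val huv
    have h1 : chart x v.1 ∈ (proj line e (chart x u.1)).1 := by
      rw [hpp, (gfun_spec h2 h4 hθ he v.2).2]; simp
    rcases proj_pts h2 h4 hθ he u.2 h1 with h | h
    · exact Subtype.ext (chart_injOn x ⟨le_of_lt v.2.1, lt_trans v.2.2 hθ.2⟩
        ⟨le_of_lt u.2.1, lt_trans u.2.2 hθ.2⟩ h).symm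
    · exfalso
      have hg := (gfun_spec h2 h4 hθ he u.2).1
      have := chart_injOn x ⟨le_of_lt v.2.1, lt_trans v.2.2 hθ.2⟩
        ⟨le_of_lt (lt_trans hθ.1 hg.1), hg.2⟩ h
      linarith [v.2.2, hg.1]
  have hsurj : Function.Surjective Φ := by
    intro a
    obtain ⟨u, hu, hau⟩ := line_mem_eq_proj h2 h4 hθ he a.2
    exact ⟨⟨u, hu⟩, Subtype.ext hau.symm⟩
  have hopen : IsOpenMap Φ := by
    intro O hO
    obtain ⟨O', hO', hOeq⟩ := isOpen_induced_iff.1 hO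
    set WU : Set Circle := chart x '' (O' ∩ Ioo 0 θ) with hWU
    have hWUopen : IsOpen WU := chart_isOpenMap x _ (hO'.inter isOpen_Ioo)
    set W : Set (Sym2 Circle) := Quot.mk (Sym2.Rel Circle) '' (WU ×ˢ arcB x θ) with hW
    have hWopen : IsOpen W := sym2_mk_isOpenMap _ (hWUopen.prod (arcB_open x θ))
    have key : Φ '' O = (fun a : ↥(line e) => ((a : Event) : Sym2 Circle)) ⁻¹' W := by
      ext a
      constructor
      · rintro ⟨u, huO, rfl⟩
        show ((Φ u : Event) : Sym2 Circle) ∈ W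
        rw [hval u]
        refine ⟨(chart x u.1, chart x (gfun line e x θ u.1)),
          ⟨⟨u.1, ⟨?_, u.2⟩, rfl⟩, ?_⟩, rfl⟩
        · rw [← hOeq] at huO; exact huO
        · exact ⟨gfun line e x θ u.1, (gfun_spec h2 h4 hθ he u.2).1, rfl⟩
      · intro ha
        obtain ⟨⟨p, w⟩, ⟨hp, hw⟩, hmk⟩ := ha
        obtain ⟨u0, hu0, rfl⟩ := hp
        have hmk' : s(chart x u0, w) = ((a : Event) : Sym2 Circle) := hmk
        have hmem : chart x u0 ∈ (a : Event).1 := by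
          rw [← hmk']; exact Sym2.mem_mk_left _ _
        have hnot : chart x u0 ∉ EventPts e :=
          chart_not_mem_eventPts hθ he ⟨hu0.2.1, lt_trans hu0.2.2 hθ.2⟩ (ne_of_lt hu0.2.2)
        have haeq : (a : Event) = proj line e (chart x u0) := proj_eq h4 hnot a.2 hmem
        refine ⟨⟨u0, hu0.2⟩, ?_, Subtype.ext haeq.symm⟩
        rw [← hOeq]; exact hu0.1
    rw [key]
    exact hWopen.preimage (continuous_subtype_val.comp continuous_subtype_val)
  set a1 : ℝ := π / θ with ha1def
  have ha1 : 0 < a1 := div_pos hπ hθ.1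
  have himage : affineHomeomorph a1 (-(π/2)) ha1.ne' '' Ioo 0 θ
      = Ioo (-(π/2)) (π/2) := by
    rw [affineHomeomorph_image_Ioo a1 (-(π/2)) 0 θ ha1]
    have h1 : a1 * 0 + -(π/2) = -(π/2) := by ring
    have hprod : a1 * θ = π := by
      rw [ha1def]
      field_simp
      exact div_self (ne_of_gt hθ.1)
    have h2' : a1 * θ + -(π/2) = π/2 := by rw [hprod]; ring
    rw [h1, h2']
  haveI : OrdConnected (Ioo (-(π/2)) (π/2)) := ordConnected_Ioo
  haveI : OrdConnected (Ioo (0:ℝ) θ) := ordConnected_Ioo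
  let e1 : ↥(Ioo (0:ℝ) θ) ≃ₜ ↥(Ioo (-(π/2)) (π/2)) :=
    ((affineHomeomorph a1 (-(π/2)) ha1.ne').image (Ioo 0 θ)).trans
      (Homeomorph.setCongr himage)
  let e2 : ↥(Ioo (-(π/2)) (π/2)) ≃ₜ ℝ := tanOrderIso.toHomeomorph
  exact ⟨(Equiv.toHomeomorphOfContinuousOpen (Equiv.ofBijective Φ ⟨hinj, hsurj⟩)
    hcont hopen).symm.trans (e1.trans e2)⟩

/-- Existence of a common timelike line through two strongly causal events:
normal form in a chart. -/
lemma common_line_exists (h2 : AxH2 line) (h3 : AxH3 line) (h4 : AxH4 line)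
    (h5 : AxH5 line) {a b : Event} {x : Circle} {θ s0 t0 : ℝ}
    (ha : a.1 = s(x, chart x θ)) (hb : b.1 = s(chart x s0, chart x t0))
    (hθ : θ ∈ Ioo 0 (2*π)) (h0 : 0 < s0) (hst : s0 < t0) (htθ : t0 < θ) :
    ∃ d : Event, a ∈ line d ∧ b ∈ line d := by
  have hπ := Real.pi_pos
  set z0 : Circle := chart x s0 with hz0
  set θb : ℝ := t0 - s0 with hθb
  have hθbmem : θb ∈ Ioo 0 (2*π) := ⟨by linarith, by linarith [hθ.2]⟩
  have hcb : chart z0 θb = chart x t0 := by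
    rw [hz0, chart_add, hθb]; ring_nf
  have hb' : b.1 = s(z0, chart z0 θb) := by rw [hb, hcb]
  set F : ℝ → ℝ :=
    fun r => (s0 + gext line b z0 θb (r - s0)) - gext line a x θ r with hF
  have hsub1 : Icc s0 t0 ⊆ Icc 0 θ := Icc_subset_Icc (le_of_lt h0) (le_of_lt htθ)
  have hsub2 : Icc s0 t0 ⊆ Ioo 0 θ := fun r hr => ⟨lt_of_lt_of_le h0 hr.1,
    lt_of_le_of_lt hr.2 htθ⟩
  have hFcont : ContinuousOn F (Icc s0 t0) := by
    apply ContinuousOn.sub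
    · apply ContinuousOn.add continuousOn_const
      apply ContinuousOn.comp (gext_continuousOn h2 h3 h4 hθbmem hb')
        (continuousOn_id.sub continuousOn_const)
      intro r hr
      exact ⟨by simp [sub_nonneg]; exact hr.1, by simp [hθb]; linarith [hr.2]⟩
    · exact (gext_continuousOn h2 h3 h4 hθ ha).mono hsub1
  have hFs0 : 0 < F s0 := by
    have h1 : gext line a x θ s0 = gfun line a x θ s0 :=
      gext_of_mem (hsub2 ⟨le_rfl, le_of_lt hst⟩)
    have h2' := (gfun_spec h2 h4 hθ ha (hsub2 ⟨le_rfl, le_of_lt hst⟩)).1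
    rw [hF]
    simp only [sub_self, gext_zero, h1]
    linarith [h2'.2]
  have hFt0 : F t0 < 0 := by
    have h1 : gext line a x θ t0 = gfun line a x θ t0 :=
      gext_of_mem (hsub2 ⟨le_of_lt hst, le_rfl⟩)
    have h2' := (gfun_spec h2 h4 hθ ha (hsub2 ⟨le_of_lt hst, le_rfl⟩)).1
    show (s0 + gext line b z0 θb (t0 - s0)) - gext line a x θ t0 < 0
    rw [show t0 - s0 = θb from rfl, gext_theta hθbmem.1, h1]
    have hs0θb : s0 + θb = t0 := by rw [hθb]; ring
    linarith [h2'.1]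
  have hIVT := intermediate_value_Icc' (le_of_lt hst) hFcont
  have h0mem : (0:ℝ) ∈ Icc (F t0) (F s0) := ⟨le_of_lt hFt0, le_of_lt hFs0⟩
  obtain ⟨r, hr, hFr⟩ := hIVT h0mem
  have hrIoo : r ∈ Ioo s0 t0 := by
    rcases eq_or_lt_of_le hr.1 with h | h
    · exfalso; rw [← h] at hFr; linarith
    rcases eq_or_lt_of_le hr.2 with h' | h'
    · exfalso; rw [h'] at hFr; linarith
    exact ⟨h, h'⟩
  have hra : r ∈ Ioo 0 θ := ⟨lt_trans h0 hrIoo.1, lt_trans hrIoo.2 htθ⟩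
  have hrb : r - s0 ∈ Ioo 0 θb := ⟨by linarith [hrIoo.1], by linarith [hrIoo.2]⟩
  -- the common event
  have hαβ : s0 + gfun line b z0 θb (r - s0) = gfun line a x θ r := by
    have e1 : gext line b z0 θb (r - s0) = gfun line b z0 θb (r - s0) := gext_of_mem hrb
    have e2 : gext line a x θ r = gfun line a x θ r := gext_of_mem hra
    have hFr' : (s0 + gext line b z0 θb (r - s0)) - gext line a x θ r = 0 := hFr
    rw [e1, e2] at hFr'
    linarith
  set d := proj line a (chart x r) with hd
  have hda : d ∈ line a := proj_mem_line h4 hθ ha hra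
  have hdrep : d.1 = s(chart x r, chart x (gfun line a x θ r)) :=
    (gfun_spec h2 h4 hθ ha hra).2
  set d' := proj line b (chart z0 (r - s0)) with hd'
  have hdb : d' ∈ line b := proj_mem_line h4 hθbmem hb' hrb
  have hdrep' : d'.1 = s(chart z0 (r - s0), chart z0 (gfun line b z0 θb (r - s0))) :=
    (gfun_spec h2 h4 hθbmem hb' hrb).2
  have hpt1 : chart z0 (r - s0) = chart x r := by rw [hz0, chart_add]; ring_nf
  have hpt2 : chart z0 (gfun line b z0 θb (r - s0)) = chart x (gfun line a x θ r) := by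
    rw [hz0, chart_add, hαβ]
  have hdd : d = d' := by
    apply Subtype.ext
    rw [hdrep, hdrep', hpt1, hpt2]
  refine ⟨d, h5 a d hda, ?_⟩
  rw [hdd]
  exact h5 b d' hdb

/-- Two distinct events lie on a common timelike line if they are strongly causal. -/
lemma strongCausal_common (h2 : AxH2 line) (h3 : AxH3 line) (h4 : AxH4 line)
    (h5 : AxH5 line) {a b : Event} (h : StrongCausal a b) :
    ∃ d : Event, a ∈ line d ∧ b ∈ line d := by
  obtain ⟨p, q, hap⟩ := event_rep a
  obtain ⟨z, u, hbz⟩ := event_rep b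
  have hpq : p ≠ q := event_ne hap
  have hzu : z ≠ u := event_ne hbz
  have hnl := h.2
  have hzp : z ≠ p := fun h' => hnl ⟨p, by rw [hap]; simp, by rw [hbz, ← h']; simp⟩
  have hzq : z ≠ q := fun h' => hnl ⟨q, by rw [hap]; simp, by rw [hbz, ← h']; simp⟩
  have hup : u ≠ p := fun h' => hnl ⟨p, by rw [hap]; simp, by rw [hbz, ← h']; simp⟩
  have huq : u ≠ q := fun h' => hnl ⟨q, by rw [hap]; simp, by rw [hbz, ← h']; simp⟩
  obtain ⟨θ, hθ, hqθ⟩ := exists_angle hpq.symm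
  obtain ⟨sz, hsz, hzs⟩ := exists_angle hzp
  obtain ⟨tu, htu, hut⟩ := exists_angle hup
  have hszθ : sz ≠ θ := by rintro rfl; rw [hzs] at hqθ; exact hzq hqθ
  have htuθ : tu ≠ θ := by rintro rfl; rw [hut] at hqθ; exact huq hqθ
  have hsztu : sz ≠ tu := by rintro rfl; rw [hzs] at hut; exact hzu hut
  have hnsep : ¬ SeparatesPts p q z u := by
    intro hsep
    exact h.1 ⟨p, q, z, u, hap, hbz, hsep⟩
  rw [← hqθ, ← hzs, ← hut] at hnsep
  have hside : ¬ ((sz < θ ∧ θ < tu) ∨ (tu < θ ∧ θ < sz)) := by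
    intro hc
    exact hnsep ((sepChar hθ hsz htu hszθ htuθ).2 hc)
  rw [← hqθ] at hap
  rw [← hzs, ← hut] at hbz
  rcases lt_or_gt_of_ne hszθ with hzlt | hzgt
  · -- both below θ
    have hulr : tu < θ := by
      rcases lt_or_gt_of_ne htuθ with h' | h'
      · exact h'
      · exact absurd (Or.inl ⟨hzlt, h'⟩) hside
    rcases lt_or_gt_of_ne hsztu with ho | ho
    · exact common_line_exists h2 h3 h4 h5 hap hbz hθ hsz.1 ho hulr
    · rw [Sym2.eq_swap] at hbz
      exact common_line_exists h2 h3 h4 h5 hap hbz hθ htu.1 ho hzlt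
  · -- both above θ: rebase at q
    have hugt : θ < tu := by
      rcases lt_or_gt_of_ne htuθ with h' | h'
      · exact absurd (Or.inr ⟨h', hzgt⟩) hside
      · exact h'
    have hap' : a.1 = s(chart p θ, chart (chart p θ) (2*π - θ)) := by
      rw [chart_base p hθ, hap, Sym2.eq_swap]
    have hz' : chart p sz = chart (chart p θ) (sz - θ) := by rw [chart_add]; ring_nf
    have hu' : chart p tu = chart (chart p θ) (tu - θ) := by rw [chart_add]; ring_nf
    have hθ' : 2*π - θ ∈ Ioo 0 (2*π) := ⟨by linarith [hθ.2], by linarith [hθ.1]⟩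
    rcases lt_or_gt_of_ne hsztu with ho | ho
    · rw [hz', hu'] at hbz
      exact common_line_exists h2 h3 h4 h5 hap' hbz hθ'
        (by linarith) (by linarith) (by linarith [htu.2])
    · rw [hz', hu', Sym2.eq_swap] at hbz
      exact common_line_exists h2 h3 h4 h5 hap' hbz hθ'
        (by linarith) (by linarith) (by linarith [hsz.2])

/-- Two distinct events on a common timelike line are strongly causal. -/
lemma strong_of_two_on_line (h2 : AxH2 line) (h3 : AxH3 line) (h4 : AxH4 line)
    {c d e : Event} (hne : c ≠ d) (hc : c ∈ line e) (hd : d ∈ line e) :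
    StrongCausal c d := by
  refine ⟨h3 e c d hc hd, ?_⟩
  rintro ⟨w, hwc, hwd⟩
  have hw : w ∉ EventPts e := line_pt_not_mem h2 hc hwc
  exact hne ((h4 e w hw).unique ⟨hc, hwc⟩ ⟨hd, hwd⟩)

end LineAux

end Aux

/-- properties of timelike lines in a causal space: (a) every timelike
line is homeomorphic to `ℝ` and the boundary of its closure in `aY ∪ ∂∞aY = Sym². S¹`
is the dual event; (b) two distinct events lie on a (unique) common timelike line iff
they are in the strong causal relation; (c) two distinct timelike lines meet (in a
unique event) iff their dual events are in the strong causal relation; (d) a light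
line `p_x` meets `h_e` (in a unique event) iff `x ∉ e`. -/
theorem stmt7 (line : Event → Set Event)
    (h1 : AxH1 (Set.range line) line) (h2 : AxH2 line) (h3 : AxH3 line)
    (h4 : AxH4 line) (h5 : AxH5 line) (h6 : AxH6 line) :
    (∀ e : Event, Nonempty (↥(line e) ≃ₜ ℝ) ∧
      ∀ x y : Circle, e.1 = s(x, y) →
        closure (Subtype.val '' line e : Set (Sym2 Circle))
          = (Subtype.val '' line e) ∪ {Sym2.diag x, Sym2.diag y}) ∧
    (∀ a b : Event, a ≠ b →
      ((∃ e, a ∈ line e ∧ b ∈ line e) ↔ StrongCausal a b) ∧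
      ∀ e e', a ∈ line e → b ∈ line e → a ∈ line e' → b ∈ line e' → e = e') ∧
    (∀ e e' : Event, e ≠ e' →
      ((∃ a, a ∈ line e ∧ a ∈ line e') ↔ StrongCausal e e') ∧
      ∀ a a', a ∈ line e → a ∈ line e' → a' ∈ line e → a' ∈ line e' → a = a') ∧
    (∀ x : Circle, ∀ e : Event,
      ((∃ a, a ∈ line e ∧ x ∈ a.1) ↔ x ∉ EventPts e) ∧
      ∀ a a', a ∈ line e → x ∈ a.1 → a' ∈ line e → x ∈ a'.1 → a = a') := by
  refine ⟨?_, ?_, ?_, ?_⟩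
  · -- (a)
    intro e
    constructor
    · obtain ⟨p, q, hpq⟩ := event_rep e
      obtain ⟨θ, hθ, hqθ⟩ := exists_angle (event_ne hpq).symm
      exact line_homeo h2 h3 h4 hθ (by rw [hpq, ← hqθ])
    · intro x y hxy
      obtain ⟨θ, hθ, hyθ⟩ := exists_angle (event_ne hxy).symm
      have hcl := line_closure_chart h2 h3 h4 hθ (by rw [hxy, ← hyθ])
      rw [hyθ] at hcl
      exact hcl
  · -- (b)
    intro a b hab
    refine ⟨⟨?_, ?_⟩, ?_⟩
    · rintro ⟨e, ha, hb⟩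
      exact strong_of_two_on_line h2 h3 h4 hab ha hb
    · intro h
      exact strongCausal_common h2 h3 h4 h5 h
    · intro e e' hae hbe hae' hbe'
      exact h6 a b hab e e' hae hbe hae' hbe'
  · -- (c)
    intro e e' hee
    constructor
    · constructor
      · rintro ⟨a, hae, hae'⟩
        exact strong_of_two_on_line h2 h3 h4 hee (h5 e a hae) (h5 e' a hae')
      · intro h
        obtain ⟨d, hd, hd'⟩ := strongCausal_common h2 h3 h4 h5 h
        exact ⟨d, h5 d e hd, h5 d e' hd'⟩
    · intro a a' hae hae' ha'e ha'e'
      by_contra hne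
      exact hee (h6 a a' hne e e' hae ha'e hae' ha'e')
  · -- (d)
    intro x e
    constructor
    · constructor
      · rintro ⟨a, ha, hx⟩
        exact line_pt_not_mem h2 ha hx
      · intro hx
        obtain ⟨a, ⟨ha, hm⟩, -⟩ := h4 e x hx
        exact ⟨a, ha, hm⟩
    · intro a a' ha hx ha' hx'
      exact (h4 e x (line_pt_not_mem h2 ha hx)).unique ⟨ha, hx⟩ ⟨ha', hx'⟩


end Paper
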